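/- Let λ ∈ ℝ^d with λ₁ ≥ ⋯ ≥ λ_r > λ_{r+1} = ⋯ = λ_d = 0 for some r with s ≤ r ≤ d, and let k = k(λ,s). Then: (a) for every β ∈ ℝ^d with 0 < β₁ ≤ ⋯ ≤ β_d, one has −∑_{i=1}^s log β_i + ∑_{i=1}^d λ_i β_i ≥ log(∏_{i=1}^k λ_i) + (s−k)·log((1/(s−k)) ∑_{i=k+1}^d λ_i) + s; and (b) equality is attained by the vector β* with β*_i = 1/λ_i for i ∈ {1,…,k} and β*_i = (s−k)/(∑_{j=k+1}^d λ_j) for i ∈ {k+1,…,d}. -/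

import Mathlib

open Matrix Finset

noncomputable section

/-- `lam` lists the eigenvalues (with multiplicity) of the real symmetric matrix `X`,
via an orthogonal spectral decomposition. -/
def IsSpectralDecomp {m : Type*} [Fintype m] [DecidableEq m]
    (X : Matrix m m ℝ) (lam : m → ℝ) : Prop :=
  ∃ Q : Matrix m m ℝ, Q * Qᵀ = 1 ∧ X = Q * Matrix.diagonal lam * Qᵀ

/-- Principal submatrix `C_{S,S}`. -/
def subSub {n : ℕ} (C : Matrix (Fin n) (Fin n) ℝ) (S : Finset (Fin n)) :
    Matrix {i // i ∈ S} {i // i ∈ S} ℝ :=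
  Matrix.of fun a b => C a.1 b.1

/-- The value `λ_{i+1}` (1-based), i.e. the coordinate of `lam` of 0-based index `i`;
`0` when out of range. -/
def extVal {d : ℕ} (lam : Fin d → ℝ) : ℕ → ℝ :=
  fun i => if h : i < d then lam ⟨i, h⟩ else 0

/-- `∑_{i=k+1}^d λ_i` (1-based), i.e. the sum of the coordinates of 0-based index `≥ k`. -/
def tailSum {d : ℕ} (lam : Fin d → ℝ) (k : ℕ) : ℝ :=
  ∑ i ∈ Finset.univ.filter (fun i : Fin d => k ≤ (i : ℕ)), lam i

/-- `k = k(λ, s)`: an integer `0 ≤ k < s` with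
`λ_k > (1/(s-k)) ∑_{i=k+1}^d λ_i ≥ λ_{k+1}`, with the convention `λ₀ = +∞`. -/
def IsKIndex {d : ℕ} (lam : Fin d → ℝ) (s k : ℕ) : Prop :=
  k < s ∧ extVal lam k ≤ tailSum lam k / ((s : ℝ) - k) ∧
    (k = 0 ∨ tailSum lam k / ((s : ℝ) - k) < extVal lam (k - 1))

/-- `P` is the Moore–Penrose pseudoinverse of `X`. -/
def IsPseudoInv {d : ℕ} (X P : Matrix (Fin d) (Fin d) ℝ) : Prop :=
  X * P * X = X ∧ P * X * P = P ∧ (X * P)ᵀ = X * P ∧ (P * X)ᵀ = P * X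

lemma card_filter_lt_eq {d : ℕ} (s : ℕ) (h : s ≤ d) :
    (Finset.univ.filter (fun i : Fin d => (i : ℕ) < s)).card = s := by
  rw [← Finset.card_range s]
  apply Finset.card_bij (fun (i : Fin d) _ => (i : ℕ))
  · intro a ha; simp at ha ⊢; exact ha
  · intro a _ b _ hab; exact Fin.ext hab
  · intro b hb
    simp only [Finset.mem_range] at hb
    exact ⟨⟨b, lt_of_lt_of_le hb h⟩, by simp [hb], rfl⟩


/-- With `λ₁ ≥ ⋯ ≥ λ_r > λ_{r+1} = ⋯ = λ_d = 0`, `s ≤ r ≤ d`,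
and `k = k(λ,s)`: (a) every positive nondecreasing `β` satisfies
`−∑_{i≤s} log βᵢ + ∑ λᵢβᵢ ≥ Γ_s + s`, and (b) the explicit `β*` attains equality. -/
theorem stmt_5 (d s r : ℕ) (hs1 : 1 ≤ s) (hsr : s ≤ r) (hrd : r ≤ d)
    (lam : Fin d → ℝ) (hsort : Antitone lam)
    (hpos : ∀ i : Fin d, (i : ℕ) < r → 0 < lam i)
    (hzero : ∀ i : Fin d, r ≤ (i : ℕ) → lam i = 0)
    (k : ℕ) (hk : IsKIndex lam s k) :
    (∀ beta : Fin d → ℝ, (∀ i, 0 < beta i) → Monotone beta →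
      Real.log (∏ i ∈ Finset.univ.filter (fun i : Fin d => (i : ℕ) < k), lam i)
          + ((s : ℝ) - k) * Real.log (tailSum lam k / ((s : ℝ) - k)) + s
        ≤ - (∑ i ∈ Finset.univ.filter (fun i : Fin d => (i : ℕ) < s), Real.log (beta i))
          + ∑ i, lam i * beta i) ∧
    (let betastar : Fin d → ℝ := fun i =>
        if (i : ℕ) < k then 1 / lam i else ((s : ℝ) - k) / tailSum lam k
     (∀ i, 0 < betastar i) ∧ Monotone betastar ∧
      - (∑ i ∈ Finset.univ.filter (fun i : Fin d => (i : ℕ) < s), Real.log (betastar i))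
          + ∑ i, lam i * betastar i
        = Real.log (∏ i ∈ Finset.univ.filter (fun i : Fin d => (i : ℕ) < k), lam i)
          + ((s : ℝ) - k) * Real.log (tailSum lam k / ((s : ℝ) - k)) + s) := by
  classical
  obtain ⟨hks, hle, hor⟩ := hk
  have hsd : s ≤ d := hsr.trans hrd
  have hkd : k < d := lt_of_lt_of_le hks hsd
  have hkr : k < r := lt_of_lt_of_le hks hsr
  have hlamnn : ∀ i : Fin d, 0 ≤ lam i := fun i => by
    by_cases h : (i : ℕ) < r
    · exact (hpos i h).le
    · exact (hzero i (not_lt.mp h)).ge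
  have hlamposk : ∀ i : Fin d, (i : ℕ) < k → 0 < lam i := fun i hi =>
    hpos i (lt_trans hi hkr)
  set T := tailSum lam k with hTdef
  set A := Finset.univ.filter (fun i : Fin d => (i : ℕ) < k) with hAdef
  set S := Finset.univ.filter (fun i : Fin d => (i : ℕ) < s) with hSdef
  set K := Finset.univ.filter (fun i : Fin d => k ≤ (i : ℕ)) with hKdef
  set B := Finset.univ.filter (fun i : Fin d => k ≤ (i : ℕ) ∧ (i : ℕ) < s) with hBdef
  set C := Finset.univ.filter (fun i : Fin d => s ≤ (i : ℕ)) with hCdef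
  have hTK : T = ∑ i ∈ K, lam i := by rw [hTdef, hKdef]; rfl
  have hSAB : S = A ∪ B := by
    ext i; simp only [hSdef, hAdef, hBdef, Finset.mem_filter, Finset.mem_union,
      Finset.mem_univ, true_and]; omega
  have hKBC : K = B ∪ C := by
    ext i; simp only [hKdef, hBdef, hCdef, Finset.mem_filter, Finset.mem_union,
      Finset.mem_univ, true_and]; omega
  have hUnivAK : (Finset.univ : Finset (Fin d)) = A ∪ K := by
    ext i; simp only [hAdef, hKdef, Finset.mem_filter, Finset.mem_union,
      Finset.mem_univ, true_and, true_iff]; omega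
  have hdAB : Disjoint A B := by
    rw [Finset.disjoint_left]; intro i hi hj
    simp only [hAdef, hBdef, Finset.mem_filter, Finset.mem_univ, true_and] at hi hj; omega
  have hdBC : Disjoint B C := by
    rw [Finset.disjoint_left]; intro i hi hj
    simp only [hBdef, hCdef, Finset.mem_filter, Finset.mem_univ, true_and] at hi hj; omega
  have hdAK : Disjoint A K := by
    rw [Finset.disjoint_left]; intro i hi hj
    simp only [hAdef, hKdef, Finset.mem_filter, Finset.mem_univ, true_and] at hi hj; omega
  have cardA : A.card = k := card_filter_lt_eq k hkd.le
  have cardS : S.card = s := card_filter_lt_eq s hsd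
  have cardB : B.card = s - k := by
    have := hSAB ▸ cardS
    rw [Finset.card_union_of_disjoint hdAB, cardA] at this
    omega
  have hcastB : ((B.card : ℕ) : ℝ) = (s : ℝ) - k := by
    rw [cardB, Nat.cast_sub hks.le]
  have hmpos : (0 : ℝ) < (s : ℝ) - k := by
    have : (k : ℝ) < s := by exact_mod_cast hks
    linarith
  have hTpos : 0 < T := by
    have hmem : (⟨k, hkd⟩ : Fin d) ∈ K := by simp [hKdef]
    have h1 : lam ⟨k, hkd⟩ ≤ ∑ i ∈ K, lam i :=
      Finset.single_le_sum (fun i _ => hlamnn i) hmem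
    rw [hTK]; exact lt_of_lt_of_le (hpos _ hkr) h1
  set c := T / ((s : ℝ) - k) with hcdef
  have hcpos : 0 < c := div_pos hTpos hmpos
  have hmul : c * ((s : ℝ) - k) = T := div_mul_cancel₀ T hmpos.ne'
  have hck : lam ⟨k, hkd⟩ ≤ c := by rwa [extVal, dif_pos hkd] at hle
  have hci : ∀ i : Fin d, k ≤ (i : ℕ) → lam i ≤ c := by
    intro i hi
    refine le_trans (hsort ?_) hck
    simpa [Fin.le_def] using hi
  have hclt : ∀ i : Fin d, (i : ℕ) < k → c < lam i := by
    intro i hi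
    rcases hor with h0 | hlt
    · omega
    · have hk1d : k - 1 < d := by omega
      rw [extVal, dif_pos hk1d] at hlt
      refine lt_of_lt_of_le hlt (hsort ?_)
      simp only [Fin.le_def]; omega
  have hlogprod : Real.log (∏ i ∈ A, lam i) = ∑ i ∈ A, Real.log (lam i) :=
    Real.log_prod (fun i hi =>
      (hlamposk i (by simpa [hAdef] using hi)).ne')
  constructor
  · intro beta hbpos hbmono
    have hs1d : s - 1 < d := by omega
    set sl : Fin d := ⟨s - 1, hs1d⟩ with hsl
    have hBsl : ∀ i ∈ B, beta i ≤ beta sl := by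
      intro i hi
      simp only [hBdef, Finset.mem_filter, Finset.mem_univ, true_and] at hi
      apply hbmono; simp only [Fin.le_def, hsl]; omega
    have hCsl : ∀ i ∈ C, beta sl ≤ beta i := by
      intro i hi
      simp only [hCdef, Finset.mem_filter, Finset.mem_univ, true_and] at hi
      apply hbmono; simp only [Fin.le_def, hsl]; omega
    have hBc : ∀ i ∈ B, lam i ≤ c := by
      intro i hi
      simp only [hBdef, Finset.mem_filter, Finset.mem_univ, true_and] at hi
      exact hci i hi.1
    have e1 : ∑ i ∈ B, lam i * beta i
        = ∑ i ∈ B, (lam i - c) * beta i + c * ∑ i ∈ B, beta i := by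
      rw [Finset.mul_sum, ← Finset.sum_add_distrib]
      exact Finset.sum_congr rfl fun i _ => by ring
    set u := ∑ i ∈ B, (lam i - c) with hu
    set v := ∑ i ∈ C, lam i with hv
    have huv : u + v = 0 := by
      have h1 : ∑ i ∈ B, lam i + v = T := by
        rw [hTK, hKBC, Finset.sum_union hdBC]
      have h2 : u = ∑ i ∈ B, lam i - c * ((s : ℝ) - k) := by
        rw [hu, Finset.sum_sub_distrib, Finset.sum_const, nsmul_eq_mul, hcastB]; ring
      rw [h2]; linarith [hmul]
    have h1' : u * beta sl ≤ ∑ i ∈ B, (lam i - c) * beta i := by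
      rw [hu, Finset.sum_mul]
      apply Finset.sum_le_sum
      intro i hi
      exact mul_le_mul_of_nonpos_left (hBsl i hi) (by linarith [hBc i hi])
    have h2' : v * beta sl ≤ ∑ i ∈ C, lam i * beta i := by
      rw [hv, Finset.sum_mul]
      apply Finset.sum_le_sum
      intro i hi
      exact mul_le_mul_of_nonneg_left (hCsl i hi) (hlamnn i)
    have hzero' : u * beta sl + v * beta sl = 0 := by rw [← add_mul, huv, zero_mul]
    have key : c * ∑ i ∈ B, beta i ≤ ∑ i ∈ K, lam i * beta i := by
      rw [hKBC, Finset.sum_union hdBC, e1]; linarith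
    have hAlog : ∀ i ∈ A, Real.log (lam i) + Real.log (beta i) + 1 ≤ lam i * beta i := by
      intro i hi
      have hl : 0 < lam i := hlamposk i (by simpa [hAdef] using hi)
      have hb := hbpos i
      have h := Real.log_le_sub_one_of_pos (mul_pos hl hb)
      rw [Real.log_mul hl.ne' hb.ne'] at h
      linarith
    have sumA : ∑ i ∈ A, Real.log (lam i) + ∑ i ∈ A, Real.log (beta i) + (k : ℝ)
        ≤ ∑ i ∈ A, lam i * beta i := by
      have h := Finset.sum_le_sum hAlog
      rw [Finset.sum_add_distrib, Finset.sum_add_distrib, Finset.sum_const,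
        nsmul_eq_mul, cardA] at h
      simpa using h
    have hBlog : ∀ i ∈ B, Real.log c + Real.log (beta i) + 1 ≤ c * beta i := by
      intro i _
      have hb := hbpos i
      have h := Real.log_le_sub_one_of_pos (mul_pos hcpos hb)
      rw [Real.log_mul hcpos.ne' hb.ne'] at h
      linarith
    have sumB : ((s : ℝ) - k) * Real.log c + ∑ i ∈ B, Real.log (beta i) + ((s : ℝ) - k)
        ≤ c * ∑ i ∈ B, beta i := by
      have h := Finset.sum_le_sum hBlog
      rw [Finset.sum_add_distrib, Finset.sum_add_distrib, Finset.sum_const, Finset.sum_const,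
        nsmul_eq_mul, nsmul_eq_mul, hcastB, ← Finset.mul_sum] at h
      calc ((s : ℝ) - k) * Real.log c + ∑ i ∈ B, Real.log (beta i) + ((s : ℝ) - k)
          = ((s : ℝ) - k) * Real.log c + ∑ i ∈ B, Real.log (beta i) + ((s : ℝ) - k) * 1 := by ring
        _ ≤ c * ∑ i ∈ B, beta i := h
    have hSsplit : ∑ i ∈ S, Real.log (beta i)
        = ∑ i ∈ A, Real.log (beta i) + ∑ i ∈ B, Real.log (beta i) := by
      rw [hSAB, Finset.sum_union hdAB]
    have hUsplit : ∑ i, lam i * beta i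
        = ∑ i ∈ A, lam i * beta i + ∑ i ∈ K, lam i * beta i := by
      rw [show (Finset.univ : Finset (Fin d)) = A ∪ K from hUnivAK,
        Finset.sum_union hdAK]
    rw [hlogprod, hSsplit, hUsplit]
    linarith [key, sumA, sumB]
  · refine ⟨?_, ?_, ?_⟩
    · intro i
      dsimp only
      by_cases hi : (i : ℕ) < k
      · rw [if_pos hi]; exact one_div_pos.2 (hlamposk i hi)
      · rw [if_neg hi]; exact div_pos hmpos hTpos
    · intro i j hij
      dsimp only
      by_cases hi : (i : ℕ) < k <;> by_cases hj : (j : ℕ) < k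
      · rw [if_pos hi, if_pos hj]
        exact one_div_le_one_div_of_le (hlamposk j hj) (hsort hij)
      · rw [if_pos hi, if_neg hj]
        have h1 : 1 / lam i ≤ 1 / c := one_div_le_one_div_of_le hcpos (hclt i hi).le
        have h2 : (1 : ℝ) / c = ((s : ℝ) - k) / T := by
          rw [hcdef, one_div_div]
        linarith [h1, h2.le]
      · exact absurd (Fin.le_def.1 hij) (by omega)
      · rw [if_neg hi, if_neg hj]
    · have hA' : ∀ i ∈ A, Real.log
          ((fun i : Fin d => if (i : ℕ) < k then 1 / lam i else ((s : ℝ) - k) / T) i)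
          = -Real.log (lam i) := by
        intro i hi
        have hik : (i : ℕ) < k := by simpa [hAdef] using hi
        simp only [if_pos hik, one_div, Real.log_inv]
      have hB' : ∀ i ∈ B, Real.log
          ((fun i : Fin d => if (i : ℕ) < k then 1 / lam i else ((s : ℝ) - k) / T) i)
          = -Real.log c := by
        intro i hi
        simp only [hBdef, Finset.mem_filter, Finset.mem_univ, true_and] at hi
        have hik : ¬ (i : ℕ) < k := by omega
        have hcinv : ((s : ℝ) - k) / T = c⁻¹ := by rw [hcdef, inv_div]
        simp only [if_neg hik, hcinv, Real.log_inv]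
      have e_log : ∑ i ∈ S, Real.log
          ((fun i : Fin d => if (i : ℕ) < k then 1 / lam i else ((s : ℝ) - k) / T) i)
          = -(∑ i ∈ A, Real.log (lam i)) - ((s : ℝ) - k) * Real.log c := by
        rw [hSAB, Finset.sum_union hdAB, Finset.sum_congr rfl hA',
          Finset.sum_congr rfl hB', Finset.sum_const, Finset.sum_neg_distrib,
          nsmul_eq_mul, hcastB]
        ring
      have e_sum : ∑ i, lam i *
          ((fun i : Fin d => if (i : ℕ) < k then 1 / lam i else ((s : ℝ) - k) / T) i)
          = (s : ℝ) := by
        rw [show (Finset.univ : Finset (Fin d)) = A ∪ K from hUnivAK,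
          Finset.sum_union hdAK]
        have hA'' : ∀ i ∈ A, lam i *
            ((fun i : Fin d => if (i : ℕ) < k then 1 / lam i else ((s : ℝ) - k) / T) i)
            = 1 := by
          intro i hi
          have hik : (i : ℕ) < k := by simpa [hAdef] using hi
          have := (hlamposk i hik).ne'
          simp only [if_pos hik]
          field_simp
        have hK'' : ∀ i ∈ K, lam i *
            ((fun i : Fin d => if (i : ℕ) < k then 1 / lam i else ((s : ℝ) - k) / T) i)
            = lam i * (((s : ℝ) - k) / T) := by
          intro i hi
          simp only [hKdef, Finset.mem_filter, Finset.mem_univ, true_and] at hi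
          have hik : ¬ (i : ℕ) < k := by omega
          simp only [if_neg hik]
        rw [Finset.sum_congr rfl hA'', Finset.sum_congr rfl hK'',
          ← Finset.sum_mul, ← hTK, Finset.sum_const, nsmul_eq_mul, cardA]
        field_simp
        ring
      rw [hlogprod, e_log, e_sum]
      ring
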